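/- Let (Ω, P) be a probability space and T ≥ 1. Let v_i > 0, v_* > 0, μ_i, μ_*, and Δ > 0 be real constants with W_* − W_i ≥ Δ, where W_i = μ_i·v_i and W_* = μ_*·v_*. Let μ̂_i, μ̂_*, ε_i, ε_* : Ω → ℝ be measurable with ε_i ≥ 0 and ε_* ≥ 0 everywhere, and suppose: (a) P(W_i < (μ̂_i − ε_i)·v_i) ≤ T^{-4}; (b) P(W_* > (μ̂_* + ε_*)·v_*) ≤ T^{-4}; (c) 2·ε_i·v_i < Δ almost surely. Then P((μ̂_* + ε_*)·v_* > (μ̂_i + ε_i)·v_i) ≥ 1 − 2·T^{-4}. -/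

import Mathlib

open MeasureTheory

/-- with high probability the optimal arm's social-welfare UCB index
strictly exceeds that of any arm `i` outside `S_Δ` (gap at least `Δ`), given the
two bad events have probability at most `T⁻⁴` each and the confidence width of
arm `i` is almost surely below `Δ`. -/
theorem deltaUCB_optimal_ucb_exceeds_whp
    {Ω : Type*} [MeasurableSpace Ω] (P : Measure Ω) [IsProbabilityMeasure P]
    (T : ℝ) (hT : 1 ≤ T)
    (vi vs μi μs Δ : ℝ) (hvi : 0 < vi) (hvs : 0 < vs) (hΔ : 0 < Δ)
    (hgap : μs * vs - μi * vi ≥ Δ)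
    (μhi μhs εi εs : Ω → ℝ)
    (hm1 : Measurable μhi) (hm2 : Measurable μhs)
    (hm3 : Measurable εi) (hm4 : Measurable εs)
    (hεi : ∀ ω, 0 ≤ εi ω) (hεs : ∀ ω, 0 ≤ εs ω)
    (ha : P {ω | μi * vi < (μhi ω - εi ω) * vi} ≤ ENNReal.ofReal (T ^ (-4 : ℤ)))
    (hb : P {ω | μs * vs > (μhs ω + εs ω) * vs} ≤ ENNReal.ofReal (T ^ (-4 : ℤ)))
    (hc : ∀ᵐ ω ∂P, 2 * εi ω * vi < Δ) :
    P {ω | (μhs ω + εs ω) * vs > (μhi ω + εi ω) * vi} ≥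
      1 - 2 * ENNReal.ofReal (T ^ (-4 : ℤ)) := by
  set G : Set Ω := {ω | (μhs ω + εs ω) * vs > (μhi ω + εi ω) * vi} with hG
  have hGmeas : MeasurableSet G := by
    apply measurableSet_lt <;> measurability
  set A : Set Ω := {ω | μi * vi < (μhi ω - εi ω) * vi}
  set B : Set Ω := {ω | μs * vs > (μhs ω + εs ω) * vs}
  set N : Set Ω := {ω | ¬ (2 * εi ω * vi < Δ)}
  have hN : P N = 0 := by
    simpa [N, ae_iff] using hc
  have hsub : Gᶜ ⊆ A ∪ B ∪ N := by
    intro ω hω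
    by_contra hmem
    simp only [Set.mem_union, not_or, A, B, N, Set.mem_setOf_eq] at hmem
    obtain ⟨⟨hA, hB⟩, hNm⟩ := hmem
    push_neg at hA hB hNm
    apply hω
    have h1 : (μhi ω + εi ω) * vi = (μhi ω - εi ω) * vi + 2 * εi ω * vi := by ring
    have h2 : (μhi ω - εi ω) * vi ≤ μi * vi := hA
    have : (μhi ω + εi ω) * vi < μi * vi + Δ := by
      rw [h1]
      calc (μhi ω - εi ω) * vi + 2 * εi ω * vi ≤ μi * vi + 2 * εi ω * vi := by linarith
        _ < μi * vi + Δ := by linarith [hNm]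
    have : (μhi ω + εi ω) * vi < μs * vs := by linarith
    exact lt_of_lt_of_le this hB
  have hcompl : P Gᶜ ≤ 2 * ENNReal.ofReal (T ^ (-4 : ℤ)) := by
    calc P Gᶜ ≤ P (A ∪ B ∪ N) := measure_mono hsub
      _ ≤ P (A ∪ B) + P N := measure_union_le _ _
      _ = P (A ∪ B) := by rw [hN, add_zero]
      _ ≤ P A + P B := measure_union_le _ _
      _ ≤ ENNReal.ofReal (T ^ (-4 : ℤ)) + ENNReal.ofReal (T ^ (-4 : ℤ)) := add_le_add ha hb
      _ = 2 * ENNReal.ofReal (T ^ (-4 : ℤ)) := (two_mul _).symm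
  have hone : P G + P Gᶜ = 1 := by
    rw [← measure_union (disjoint_compl_right) hGmeas.compl, Set.union_compl_self,
      measure_univ]
  calc (1 : ENNReal) - 2 * ENNReal.ofReal (T ^ (-4 : ℤ)) ≤ 1 - P Gᶜ :=
        tsub_le_tsub_left hcompl 1
    _ ≤ P G := by
        rw [← hone]
        simp [ENNReal.add_sub_cancel_right (measure_ne_top P Gᶜ)]
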